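/- arXiv:2101.10389 — 11 statements merged into one kernel-verified Lean document; each statement's English description precedes it below -/
import Mathlib

section
/- Let C be a pointed category with finite limits, (f : A → B, g : C → A) a generalized point, and x : X → B a pullback-stable regular epimorphism. Form the pullbacks A ×_B X (of f, x) and C ×_B X (of f∘g, x) with induced map g×1 : C ×_B X → A ×_B X and projection π₂ : A ×_B X → X. If ker(π₂) (the kernel of π₂) and g×1 are jointly strongly epimorphic, then ker(f) and g are jointly strongly epimorphic. -/
open CategoryTheory CategoryTheory.Limits

universe u v

/-- A pullback-stable regular epimorphism. -/
def PStableRegEpi {𝒞 : Type u} [Category.{v} 𝒞] [HasFiniteLimits 𝒞] {A B : 𝒞}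
    (f : A ⟶ B) : Prop :=
  Nonempty (RegularEpi f) ∧
    ∀ (X : 𝒞) (x : X ⟶ B), Nonempty (RegularEpi (pullback.snd f x))

/-- Two morphisms into `A` are jointly strongly epimorphic if every monomorphism
into `A` through which both factor is an isomorphism. -/
def JointlyStronglyEpi {𝒞 : Type u} [Category.{v} 𝒞] {A K L : 𝒞}
    (k : K ⟶ A) (g : L ⟶ A) : Prop :=
  ∀ (M : 𝒞) (m : M ⟶ A), Mono m → (∃ u : K ⟶ M, u ≫ m = k) →
    (∃ v : L ⟶ M, v ≫ m = g) → IsIso m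

/-- If in the pulled-back generalized point `(π₂, g×1)` along a pullback-stable
regular epimorphism `x`, `ker π₂` and `g×1` are jointly strongly epimorphic,
then `ker f` and `g` are jointly strongly epimorphic. -/
theorem stmt2 {𝒞 : Type u} [Category.{v} 𝒞] [HasFiniteLimits 𝒞]
    [HasZeroObject 𝒞] [HasZeroMorphisms 𝒞]
    {A B C X : 𝒞} (f : A ⟶ B) (g : C ⟶ A) (x : X ⟶ B)
    (hgp : PStableRegEpi (g ≫ f)) (hx : PStableRegEpi x)
    (hjse : JointlyStronglyEpi (kernel.ι (pullback.snd f x))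
      (pullback.map (g ≫ f) x f x g (𝟙 X) (𝟙 B) (by simp) (by simp))) :
    JointlyStronglyEpi (kernel.ι f) g := by
  rintro M m hm ⟨u, hu⟩ ⟨v, hv⟩
  haveI := hm
  -- `pullback.fst f x` is a strong epi
  obtain ⟨hre⟩ := hx.2 A f
  haveI : IsRegularEpi (pullback.snd x f) := isRegularEpi_of_regularEpi hre
  haveI hfst : StrongEpi (pullback.fst f x) := by
    rw [← pullbackSymmetry_hom_comp_snd f x]
    infer_instance
  -- pull back `m` along `pullback.fst f x`
  haveI : Mono (pullback.fst (pullback.fst f x) m) := inferInstance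
  -- factor `ker π₂` through the pulled-back mono
  have hkf : (kernel.ι (pullback.snd f x) ≫ pullback.fst f x) ≫ f = 0 := by
    rw [Category.assoc, pullback.condition, ← Category.assoc, kernel.condition,
      zero_comp]
  have hfac1 : ∃ u' : kernel (pullback.snd f x) ⟶ pullback (pullback.fst f x) m,
      u' ≫ pullback.fst (pullback.fst f x) m = kernel.ι (pullback.snd f x) := by
    have h : kernel.ι (pullback.snd f x) ≫ pullback.fst f x =
        (kernel.lift f _ hkf ≫ u) ≫ m := by
      rw [Category.assoc, hu, kernel.lift_ι]
    exact ⟨pullback.lift _ _ h, pullback.lift_fst _ _ _⟩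
  -- factor `g×1` through the pulled-back mono
  have hfac2 : ∃ v' : pullback (g ≫ f) x ⟶ pullback (pullback.fst f x) m,
      v' ≫ pullback.fst (pullback.fst f x) m =
        pullback.map (g ≫ f) x f x g (𝟙 X) (𝟙 B) (by simp) (by simp) := by
    have h : pullback.map (g ≫ f) x f x g (𝟙 X) (𝟙 B) (by simp) (by simp) ≫
        pullback.fst f x = (pullback.fst (g ≫ f) x ≫ v) ≫ m := by
      rw [pullback.lift_fst, Category.assoc, hv]
    exact ⟨pullback.lift _ _ h, pullback.lift_fst _ _ _⟩
  haveI : IsIso (pullback.fst (pullback.fst f x) m) :=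
    hjse _ _ inferInstance hfac1 hfac2
  -- so `pullback.fst f x` factors through `m`
  have hfac : (inv (pullback.fst (pullback.fst f x) m) ≫
      pullback.snd (pullback.fst f x) m) ≫ m = pullback.fst f x ≫ 𝟙 A := by
    rw [Category.assoc, ← pullback.condition, IsIso.inv_comp_eq]
    simp
  -- strong epi lifting gives a section of `m`
  have sq : CommSq (inv (pullback.fst (pullback.fst f x) m) ≫
      pullback.snd (pullback.fst f x) m) (pullback.fst f x) m (𝟙 A) := ⟨hfac⟩
  haveI := hfst.llp m
  exact ⟨sq.lift, by
    rw [← cancel_mono m, Category.assoc, sq.fac_right, Category.comp_id,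
      Category.id_comp], sq.fac_right⟩
end

section
/- Let C be a pointed category with finite limits, (f : A → B, g : C → A) a generalized point. Form the pullback A ×_B C of f and f∘g with projections π₁, π₂, and the induced morphism ⟨g, 1_C⟩ : C → A ×_B C. If ⟨g, 1_C⟩ and ker(π₂) are jointly strongly epimorphic, then (f, g) is a strong generalized point (i.e., g and ker(f) are jointly strongly epimorphic). -/
open CategoryTheory CategoryTheory.Limits

universe u v

/-- If `⟨g, 1_C⟩` and `ker π₂` are jointly strongly epimorphic for the pullback
`A ×_B C` of `f` and `f ∘ g`, then `(f, g)` is a strong generalized point. -/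
theorem stmt4 {𝒞 : Type u} [Category.{v} 𝒞] [HasFiniteLimits 𝒞]
    [HasZeroObject 𝒞] [HasZeroMorphisms 𝒞]
    {A B C : 𝒞} (f : A ⟶ B) (g : C ⟶ A)
    (hgp : PStableRegEpi (g ≫ f))
    (hjse : JointlyStronglyEpi (kernel.ι (pullback.snd f (g ≫ f)))
      (pullback.lift g (𝟙 C) (by simp))) :
    JointlyStronglyEpi (kernel.ι f) g := by
  intro M m hm hu hv
  obtain ⟨u, hu⟩ := hu
  obtain ⟨v, hv⟩ := hv
  haveI : Mono m := hm
  -- π₁ is a strong epi, since it is the pullback of g ≫ f along f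
  obtain ⟨hreg⟩ := hgp.2 A f
  haveI : RegularEpi (pullback.snd (g ≫ f) f) := hreg
  haveI : StrongEpi (pullback.fst f (g ≫ f)) := by
    have heq : pullback.fst f (g ≫ f) =
        (pullbackSymmetry f (g ≫ f)).hom ≫ pullback.snd (g ≫ f) f := by simp
    have : IsRegularEpi (pullback.snd (g ≫ f) f) := ⟨⟨hreg⟩⟩
    rw [heq]; infer_instance
  -- the pullback of m along π₁
  haveI : Mono (pullback.snd m (pullback.fst f (g ≫ f))) :=
    pullback.snd_of_mono
  -- kernel.ι π₂ factors through this pullback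
  have hker : (kernel.ι (pullback.snd f (g ≫ f))) ≫ pullback.fst f (g ≫ f) ≫ f = 0 := by
    rw [pullback.condition, ← Category.assoc, kernel.condition, zero_comp]
  have h1 : ∃ w : kernel (pullback.snd f (g ≫ f)) ⟶ pullback m (pullback.fst f (g ≫ f)),
      w ≫ pullback.snd m (pullback.fst f (g ≫ f)) = kernel.ι (pullback.snd f (g ≫ f)) := by
    refine ⟨pullback.lift (kernel.lift f (kernel.ι (pullback.snd f (g ≫ f)) ≫
      pullback.fst f (g ≫ f)) (by simpa using hker) ≫ u)
      (kernel.ι (pullback.snd f (g ≫ f))) ?_, pullback.lift_snd _ _ _⟩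
    rw [Category.assoc, hu, kernel.lift_ι]
  -- ⟨g, 1⟩ factors through this pullback
  have h2 : ∃ w : C ⟶ pullback m (pullback.fst f (g ≫ f)),
      w ≫ pullback.snd m (pullback.fst f (g ≫ f)) = pullback.lift g (𝟙 C) (by simp) := by
    refine ⟨pullback.lift v (pullback.lift g (𝟙 C) (by simp)) (by rw [hv, pullback.lift_fst]), pullback.lift_snd _ _ _⟩
  haveI : IsIso (pullback.snd m (pullback.fst f (g ≫ f))) :=
    hjse _ _ inferInstance h1 h2
  -- hence π₁ factors through m, and π₁ is a strong epi, so m is a strong epi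
  have hfac : inv (pullback.snd m (pullback.fst f (g ≫ f))) ≫
      pullback.fst m (pullback.fst f (g ≫ f)) ≫ m = pullback.fst f (g ≫ f) := by
    rw [pullback.condition, IsIso.inv_comp_eq]
  haveI : StrongEpi m := by
    have h := hfac
    rw [← Category.assoc] at h
    haveI : StrongEpi ((inv (pullback.snd m (pullback.fst f (g ≫ f))) ≫
        pullback.fst m (pullback.fst f (g ≫ f))) ≫ m) := by
      rw [h]; infer_instance
    exact strongEpi_of_strongEpi (inv (pullback.snd m (pullback.fst f (g ≫ f))) ≫
      pullback.fst m (pullback.fst f (g ≫ f))) m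
  exact isIso_of_mono_of_strongEpi m
end

section
/- In the category of monoids, every Schreier generalized point is strong: if (f : A → B, g : C → A) is a generalized point such that for every a ∈ A and c ∈ C with f(a) = f(g(c)) there is a unique k ∈ ker f with a = k + g(c), then the images of g and of the kernel inclusion ker(f) → A together generate A; more precisely, any submonoid M of A containing g(C) and ker(f) equals A. -/
open Function

/-- `a` is a representative of `b` for `f`. -/
def IsRep {A B : Type*} [AddMonoid A] [AddMonoid B] (f : A →+ B) (a : A) (b : B) : Prop :=
  f a = b ∧ ∀ a', f a' = b → ∃! k, f k = 0 ∧ a' = k + a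

/-- A (split) Schreier point. -/
def SchreierPoint {E D : Type*} [AddMonoid E] [AddMonoid D] (p : E →+ D) (s : D →+ E) : Prop :=
  ∀ e, ∃! k, p k = 0 ∧ e = k + s (p e)

/-- A Schreier generalized point. -/
def SchreierGP {A B C : Type*} [AddMonoid A] [AddMonoid B] [AddMonoid C]
    (f : A →+ B) (g : C →+ A) : Prop :=
  Surjective (f.comp g) ∧ ∀ a c, f a = f (g c) → ∃! k, f k = 0 ∧ a = k + g c

/-- The pullback of `f : A →+ B` and `h : C →+ B`, as a submonoid of `A × C`. -/
def pbk {A B C : Type*} [AddMonoid A] [AddMonoid B] [AddMonoid C]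
    (f : A →+ B) (h : C →+ B) : AddSubmonoid (A × C) where
  carrier := {p | f p.1 = h p.2}
  zero_mem' := by simp
  add_mem' := by
    intro p q hp hq
    simp only [Set.mem_setOf_eq, Prod.fst_add, Prod.snd_add, map_add] at *
    rw [hp, hq]

/-- The second projection `A ×_B C →+ C`. -/
def proj2 {A B C : Type*} [AddMonoid A] [AddMonoid B] [AddMonoid C]
    (f : A →+ B) (h : C →+ B) : (pbk f h) →+ C :=
  (AddMonoidHom.snd A C).comp (pbk f h).subtype

/-- The induced morphism `⟨g, 1_C⟩ : C →+ A ×_B C`. -/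
def liftg {A B C : Type*} [AddMonoid A] [AddMonoid B] [AddMonoid C]
    (f : A →+ B) (g : C →+ A) : C →+ (pbk f (f.comp g)) :=
  AddMonoidHom.codRestrict (g.prod (AddMonoidHom.id C)) (pbk f (f.comp g)) (fun _ => rfl)

/-- Every Schreier generalized point of monoids is strong: any submonoid of `A`
containing the image of `g` and the kernel of `f` is all of `A`. -/
theorem stmt6 {A B C : Type*} [AddMonoid A] [AddMonoid B] [AddMonoid C]
    (f : A →+ B) (g : C →+ A) (hgp : SchreierGP f g) :
    ∀ M : AddSubmonoid A, (∀ c, g c ∈ M) → (∀ a, f a = 0 → a ∈ M) → M = ⊤ := by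
  intro M hg hk
  ext a
  simp only [AddSubmonoid.mem_top, iff_true]
  obtain ⟨c, hc⟩ := hgp.1 (f a)
  obtain ⟨k, ⟨hk0, hak⟩, -⟩ := hgp.2 a c (hc.symm)
  rw [hak]
  exact M.add_mem (hk k hk0) (hg c)
end

section
/- Let f : A → B and g : C → A be monoid homomorphisms with f ∘ g surjective. Then (f, g) is a Schreier generalized point if and only if the split point (π₂ : A ×_B C → C, ⟨g, 1_C⟩ : C → A ×_B C) is a Schreier point, where A ×_B C = {(a,c) | f(a) = f(g(c))}. -/
open Function

/-- `(f, g)` is a Schreier generalized point iff the split point `(π₂, ⟨g,1⟩)`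
is a Schreier point. -/
theorem stmt7 {A B C : Type*} [AddMonoid A] [AddMonoid B] [AddMonoid C]
    (f : A →+ B) (g : C →+ A) (hsurj : Surjective (f.comp g)) :
    SchreierGP f g ↔ SchreierPoint (proj2 f (f.comp g)) (liftg f g) := by
  constructor
  · rintro ⟨-, hGP⟩ ⟨⟨a, c⟩, hac⟩
    obtain ⟨k0, ⟨hk0, hak0⟩, huniq⟩ := hGP a c hac
    have hk0mem : (k0, (0 : C)) ∈ pbk f (f.comp g) := by
      simp [pbk, hk0]
    refine ⟨⟨(k0, 0), hk0mem⟩, ⟨rfl, ?_⟩, ?_⟩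
    · apply Subtype.ext
      simp [proj2, liftg, hak0, AddMonoidHom.codRestrict]
    · rintro ⟨⟨k1, k2⟩, hkmem⟩ ⟨hp, heq⟩
      have hk2 : k2 = 0 := hp
      subst hk2
      have hk1f : f k1 = 0 := by simpa [pbk] using hkmem
      have heq' : a = k1 + g c := congrArg (fun x : pbk f (f.comp g) => x.val.1) heq
      apply Subtype.ext
      have := huniq k1 ⟨hk1f, heq'⟩
      simp [this]
  · rintro hSP
    refine ⟨hsurj, fun a c hac => ?_⟩
    obtain ⟨⟨⟨k1, k2⟩, hkmem⟩, ⟨hp, heq⟩, huniq⟩ := hSP ⟨(a, c), hac⟩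
    have hk2 : k2 = 0 := hp
    subst hk2
    have hk1f : f k1 = 0 := by simpa [pbk] using hkmem
    have heq1 : a = k1 + g c := congrArg (fun x : pbk f (f.comp g) => x.val.1) heq
    refine ⟨k1, ⟨hk1f, heq1⟩, ?_⟩
    intro k' ⟨hk'f, hk'eq⟩
    have hk'mem : (k', (0 : C)) ∈ pbk f (f.comp g) := by simp [pbk, hk'f]
    have := huniq ⟨(k', 0), hk'mem⟩ ⟨rfl, by
      apply Subtype.ext
      simp [proj2, liftg, hk'eq, AddMonoidHom.codRestrict]⟩
    exact congrArg (fun x : pbk f (f.comp g) => x.val.1) this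
end

section
/- Let f : A → B be a surjective monoid homomorphism and suppose a ∈ A is a representative of b ∈ B (i.e., f(a) = b and for all a' with f(a') = b there is a unique k ∈ ker f with a' = k + a). Then any other representative of b yields the same uniqueness property: if a₁ is also a representative of b and a' is a representative of b', then a₁ + a' is a representative of b + b' whenever a + a' is. -/
open Function

/-- Replacement of representatives: if `a` and `a₁` both represent `b`, `a'`
represents `b'`, and `a + a'` represents `b + b'`, then so does `a₁ + a'`. -/
theorem stmt9 {A B : Type*} [AddMonoid A] [AddMonoid B] (f : A →+ B)
    (hf : Surjective f) {a a₁ a' : A} {b b' : B}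
    (ha : IsRep f a b) (ha₁ : IsRep f a₁ b) (ha' : IsRep f a' b')
    (hsum : IsRep f (a + a') (b + b')) : IsRep f (a₁ + a') (b + b') := by
  obtain ⟨k₀, ⟨hk₀0, hk₀⟩, _⟩ := ha.2 a₁ ha₁.1
  constructor
  · rw [map_add, ha₁.1, ha'.1]
  intro a'' h
  obtain ⟨k, ⟨hk0, hk⟩, hkuniq⟩ := hsum.2 a'' h
  have hx : f (k + a) = b := by rw [map_add, hk0, ha.1, zero_add]
  obtain ⟨m, ⟨hm0, hm⟩, hmuniq⟩ := ha₁.2 (k + a) hx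
  refine ⟨m, ⟨hm0, ?_⟩, ?_⟩
  · rw [hk, ← add_assoc, hm, add_assoc]
  · rintro m' ⟨hm'0, hm'⟩
    have hkey : m' + k₀ = k := by
      refine hkuniq (m' + k₀) ⟨by rw [map_add, hm'0, hk₀0, zero_add], ?_⟩
      rw [hm', hk₀]
      simp only [add_assoc]
    refine hmuniq m' ⟨hm'0, ?_⟩
    rw [← hkey, add_assoc, ← hk₀]
end

section
/- If (f : A → B, g : C → A) is a Schreier generalized point of monoids, then f is a regular Schreier epimorphism: every b ∈ B has a representative, and the set of all representatives of elements of B is a submonoid of A. -/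
open Function

section Aux

variable {A B C : Type*} [AddMonoid A] [AddMonoid B] [AddMonoid C]
  (f : A →+ B) (g : C →+ A)

/-- If `u` is a unit in the kernel, then `u + g c` is a representative of `f (g c)`. -/
theorem rep_of_unit (hdec : ∀ a c, f a = f (g c) → ∃! k, f k = 0 ∧ a = k + g c)
    (c : C) (u v : A) (hu : f u = 0) (huv : u + v = 0) (hvu : v + u = 0) :
    IsRep f (u + g c) (f (g c)) := by
  have hv : f v = 0 := by
    have h := congrArg f huv
    rw [map_add, hu, zero_add, map_zero] at h
    exact h
  constructor
  · rw [map_add, hu, zero_add]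
  · intro a' ha'
    obtain ⟨k, ⟨hk0, hk⟩, huniq⟩ := hdec a' c ha'
    refine ⟨k + v, ⟨by rw [map_add, hk0, hv, add_zero], ?_⟩, ?_⟩
    · rw [hk, ← add_assoc, add_assoc k v u, hvu, add_zero]
    · rintro m ⟨hm0, hm⟩
      have hmk : m + u = k := huniq (m + u)
        ⟨by rw [map_add, hm0, hu, add_zero], by rw [hm, add_assoc]⟩
      calc m = m + (u + v) := by rw [huv, add_zero]
        _ = (m + u) + v := by rw [add_assoc]
        _ = k + v := by rw [hmk]

/-- Kernel units can be swapped past `g c`, yielding again a kernel unit. -/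
theorem swap_unit (hdec : ∀ a c, f a = f (g c) → ∃! k, f k = 0 ∧ a = k + g c)
    (c : C) (u v : A) (hu : f u = 0) (hv : f v = 0)
    (huv : u + v = 0) (hvu : v + u = 0) :
    ∃ w x : A, f w = 0 ∧ w + x = 0 ∧ x + w = 0 ∧ g c + u = w + g c := by
  obtain ⟨w, ⟨hw0, hw⟩, hwu⟩ := hdec (g c + u) c (by rw [map_add, hu, add_zero])
  obtain ⟨x, ⟨hx0, hx⟩, hxu⟩ := hdec (g c + v) c (by rw [map_add, hv, add_zero])
  have hzero : ∀ y, f y = 0 → g c = y + g c → y = 0 := by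
    intro y hy0 hy
    obtain ⟨z, _, hzuniq⟩ := hdec (g c) c rfl
    rw [hzuniq y ⟨hy0, hy⟩, hzuniq 0 ⟨map_zero f, (zero_add _).symm⟩]
  have hwx : w + x = 0 := by
    apply hzero _ (by rw [map_add, hw0, hx0, add_zero])
    calc g c = g c + u + v := by rw [add_assoc, huv, add_zero]
      _ = w + (g c + v) := by rw [hw, add_assoc]
      _ = w + (x + g c) := by rw [hx]
      _ = (w + x) + g c := by rw [add_assoc]
  have hxw : x + w = 0 := by
    apply hzero _ (by rw [map_add, hw0, hx0, add_zero])
    calc g c = g c + v + u := by rw [add_assoc, hvu, add_zero]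
      _ = x + (g c + u) := by rw [hx, add_assoc]
      _ = x + (w + g c) := by rw [hw]
      _ = (x + w) + g c := by rw [add_assoc]
  exact ⟨w, x, hw0, hwx, hxw, hw⟩

/-- Any representative decomposes as a kernel unit plus an element of the image of `g`. -/
theorem unit_of_rep (hsurj : Surjective (f.comp g))
    (hdec : ∀ a c, f a = f (g c) → ∃! k, f k = 0 ∧ a = k + g c)
    {a : A} {b : B} (h : IsRep f a b) :
    ∃ c u v, f (g c) = b ∧ f u = 0 ∧ u + v = 0 ∧ v + u = 0 ∧ a = u + g c := by
  obtain ⟨c, hc⟩ := hsurj b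
  have hgc : f (g c) = b := hc
  obtain ⟨ha, hrep⟩ := h
  obtain ⟨k, ⟨hk0, hk⟩, hkuniq⟩ := hdec a c (ha.trans hgc.symm)
  obtain ⟨n, ⟨hn0, hn⟩, hnuniq⟩ := hrep (g c) hgc
  have hkn : k + n = 0 := by
    obtain ⟨m, _, hmuniq⟩ := hrep a ha
    rw [hmuniq (k + n) ⟨by rw [map_add, hk0, hn0, add_zero],
        by rw [add_assoc, ← hn, hk]⟩,
      hmuniq 0 ⟨map_zero f, (zero_add a).symm⟩]
  have hnk : n + k = 0 := by
    obtain ⟨m, _, hmuniq⟩ := hdec (g c) c rfl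
    rw [hmuniq (n + k) ⟨by rw [map_add, hk0, hn0, add_zero],
        by rw [add_assoc, ← hk, hn]⟩,
      hmuniq 0 ⟨map_zero f, (zero_add _).symm⟩]
  exact ⟨c, k, n, hgc, hk0, hkn, hnk, hk⟩

end Aux

/-- If `(f, g)` is a Schreier generalized point, then `f` is a regular Schreier
epimorphism: every `b` has a representative and the representatives form a submonoid. -/
theorem stmt10 {A B C : Type*} [AddMonoid A] [AddMonoid B] [AddMonoid C]
    (f : A →+ B) (g : C →+ A) (hgp : SchreierGP f g) :
    (∀ b : B, ∃ a : A, IsRep f a b) ∧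
    (∃ M : AddSubmonoid A, (M : Set A) = {a | ∃ b, IsRep f a b}) := by
  obtain ⟨hsurj, hdec⟩ := hgp
  have hrep_of_unit := rep_of_unit f g hdec
  constructor
  · intro b
    obtain ⟨c, hc⟩ := hsurj b
    have hgc : f (g c) = b := hc
    refine ⟨g c, ?_⟩
    have h := hrep_of_unit c 0 0 (map_zero f) (add_zero 0) (add_zero 0)
    rw [zero_add, hgc] at h
    exact h
  · refine ⟨{ carrier := {a | ∃ b, IsRep f a b}, zero_mem' := ?_, add_mem' := ?_ }, rfl⟩
    · rintro a a₂ ⟨b, hb⟩ ⟨b₂, hb₂⟩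
      obtain ⟨c, u, v, hgc, hu, huv, hvu, hdeca⟩ := unit_of_rep f g hsurj hdec hb
      obtain ⟨c₂, u₂, v₂, hgc₂, hu₂, huv₂, hvu₂, hdeca₂⟩ := unit_of_rep f g hsurj hdec hb₂
      obtain ⟨w, x, hw0, hwx, hxw, hswap⟩ := swap_unit f g hdec c u₂ v₂ hu₂
        (by have h := congrArg f huv₂; rwa [map_add, hu₂, zero_add, map_zero] at h)
        huv₂ hvu₂
      have key := hrep_of_unit (c + c₂) (u + w) (x + v)
        (by rw [map_add, hu, hw0, add_zero])
        (by calc u + w + (x + v) = u + ((w + x) + v) := by rw [add_assoc, add_assoc]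
              _ = 0 := by rw [hwx, zero_add, huv])
        (by calc x + v + (u + w) = x + ((v + u) + w) := by rw [add_assoc, add_assoc]
              _ = 0 := by rw [hvu, zero_add, hxw])
      have heq : a + a₂ = (u + w) + g (c + c₂) := by
        calc a + a₂ = u + g c + (u₂ + g c₂) := by rw [hdeca, hdeca₂]
          _ = u + ((g c + u₂) + g c₂) := by rw [add_assoc, add_assoc]
          _ = u + ((w + g c) + g c₂) := by rw [hswap]
          _ = (u + w) + (g c + g c₂) := by rw [add_assoc, add_assoc]
          _ = (u + w) + g (c + c₂) := by rw [map_add]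
      have hgcc : f (g (c + c₂)) = b + b₂ := by rw [map_add, map_add, hgc, hgc₂]
      rw [hgcc] at key
      exact ⟨b + b₂, heq ▸ key⟩
    · refine ⟨0, map_zero f, fun a' ha' => ⟨a', ⟨ha', (add_zero a').symm⟩, ?_⟩⟩
      rintro y ⟨-, hy⟩
      rw [add_zero] at hy
      exact hy.symm
end

section
/- If f : A → B is a regular Schreier epimorphism of monoids, then there exists a monoid C (namely the free monoid on the underlying set of B) and a monoid homomorphism g : C → A such that (f, g) is a Schreier generalized point. -/
open Function

/-- If `f` is a regular Schreier epimorphism, then there is a homomorphism `g` from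
the free monoid on `B` to `A` making `(f, g)` a Schreier generalized point. -/
theorem stmt11 {A B : Type*} [AddMonoid A] [AddMonoid B] (f : A →+ B)
    (hf : Surjective f) (hrep : ∀ b : B, ∃ a : A, IsRep f a b)
    (hsub : ∃ M : AddSubmonoid A, (M : Set A) = {a | ∃ b, IsRep f a b}) :
    ∃ g : FreeAddMonoid B →+ A, SchreierGP f g := by
  choose r hr using hrep
  set g : FreeAddMonoid B →+ A := FreeAddMonoid.lift r with hg
  obtain ⟨M, hM⟩ := hsub
  have hmem : ∀ c : FreeAddMonoid B, g c ∈ M := by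
    intro c
    have : c ∈ M.comap g := by
      have htop : M.comap g = ⊤ := by
        rw [eq_top_iff, ← FreeAddMonoid.closure_range_of, AddSubmonoid.closure_le]
        rintro _ ⟨b, rfl⟩
        simp only [AddSubmonoid.coe_comap, Set.mem_preimage, SetLike.mem_coe, hg,
          FreeAddMonoid.lift_eval_of]
        rw [← SetLike.mem_coe, hM]
        exact ⟨b, hr b⟩
      rw [htop]; trivial
    exact this
  have hrepc : ∀ c : FreeAddMonoid B, IsRep f (g c) (f (g c)) := by
    intro c
    have := hmem c
    rw [← SetLike.mem_coe, hM] at this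
    obtain ⟨b, hb⟩ := this
    rwa [hb.1]
  refine ⟨g, ?_, ?_⟩
  · intro b
    refine ⟨FreeAddMonoid.of b, ?_⟩
    simp [hg, FreeAddMonoid.lift_eval_of, (hr b).1]
  · intro a c hac
    exact (hrepc c).2 a hac
end

section
/- A monoid homomorphism f : A → B is a regular Schreier epimorphism if and only if there exists a monoid homomorphism g : C → A such that f ∘ g is surjective and the split point (π₂ : A ×_B C → C, ⟨g, 1_C⟩) is a Schreier point. -/
open Function

/-- The Schreier-point condition on the pullback split point is equivalent to the
pointwise generalized-point condition. -/
lemma schreierPoint_iff_gp {A B C : Type*} [AddMonoid A] [AddMonoid B] [AddMonoid C]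
    (f : A →+ B) (g : C →+ A) :
    SchreierPoint (proj2 f (f.comp g)) (liftg f g) ↔
      ∀ a c, f a = f (g c) → ∃! k, f k = 0 ∧ a = k + g c := by
  constructor
  · intro h a c hac
    obtain ⟨K, ⟨hK0, hKe⟩, hKu⟩ := h ⟨(a, c), hac⟩
    have hc2 : (K : A × C).2 = 0 := hK0
    have hmem : f (K : A × C).1 = f (g (K : A × C).2) := K.2
    rw [hc2, map_zero, map_zero] at hmem
    refine ⟨(K : A × C).1, ⟨hmem, ?_⟩, ?_⟩
    · have := congrArg (fun x : pbk f (f.comp g) => (x : A × C).1) hKe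
      simpa [liftg, proj2, AddMonoidHom.codRestrict] using this
    · intro k' ⟨hk'0, hk'e⟩
      have hK' : ((k', 0) : A × C) ∈ pbk f (f.comp g) := by
        show f k' = _
        simp [hk'0]
      have := hKu ⟨(k', 0), hK'⟩ ⟨rfl, by
        apply Subtype.ext
        apply Prod.ext
        · simpa [liftg, proj2, AddMonoidHom.codRestrict] using hk'e
        · simp [liftg, proj2, AddMonoidHom.codRestrict]⟩
      exact congrArg (fun x : pbk f (f.comp g) => (x : A × C).1) this
  · intro h e
    obtain ⟨⟨a, c⟩, he⟩ := e
    have he' : f a = f (g c) := he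
    obtain ⟨k, ⟨hk0, hke⟩, hku⟩ := h a c he'
    have hkmem : ((k, 0) : A × C) ∈ pbk f (f.comp g) := by
      show f k = _
      simp [hk0]
    refine ⟨⟨(k, 0), hkmem⟩, ⟨rfl, ?_⟩, ?_⟩
    · apply Subtype.ext
      apply Prod.ext
      · simpa [liftg, proj2, AddMonoidHom.codRestrict] using hke
      · simp [liftg, proj2, AddMonoidHom.codRestrict]
    · intro K ⟨hK0, hKe⟩
      have hc2 : (K : A × C).2 = 0 := hK0
      have hmem : f (K : A × C).1 = f (g (K : A × C).2) := K.2
      rw [hc2, map_zero, map_zero] at hmem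
      have h1 : a = (K : A × C).1 + g c := by
        have := congrArg (fun x : pbk f (f.comp g) => (x : A × C).1) hKe
        simpa [liftg, proj2, AddMonoidHom.codRestrict] using this
      have := hku (K : A × C).1 ⟨hmem, h1⟩
      apply Subtype.ext
      apply Prod.ext
      · exact this
      · simpa using hc2

section Backward
variable {A B C : Type*} [AddMonoid A] [AddMonoid B] [AddMonoid C]
  (f : A →+ B) (g : C →+ A)

lemma IsAddUnit.exists_inv' {M : Type*} [AddMonoid M] {v : M} (h : IsAddUnit v) :
    ∃ u, v + u = 0 ∧ u + v = 0 := by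
  obtain ⟨u, rfl⟩ := h
  exact ⟨((-u : AddUnits M) : M), by simp, by simp⟩

/-- The set of representatives is exactly the set of `v + g c` with `v` a unit
in the kernel. -/
lemma rep_char (hgp : ∀ a c, f a = f (g c) → ∃! k, f k = 0 ∧ a = k + g c)
    (hsur : Surjective (f.comp g)) (a : A) :
    (∃ b, IsRep f a b) ↔ ∃ c v, f v = 0 ∧ IsAddUnit v ∧ a = v + g c := by
  constructor
  · rintro ⟨b, hfa, hrep⟩
    obtain ⟨c, hc⟩ := hsur b
    have hc' : f (g c) = b := hc
    obtain ⟨v, ⟨hv0, hav⟩, -⟩ := hgp a c (hfa.trans hc'.symm)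
    obtain ⟨k, ⟨hk0, hgck⟩, -⟩ := hrep (g c) hc'
    -- k + v = 0
    obtain ⟨k₀, -, hk₀u⟩ := hgp (g c) c rfl
    have h1 : k + v = 0 := by
      have e1 : k + v = k₀ := hk₀u (k + v)
        ⟨by simp [hk0, hv0], by rw [add_assoc, ← hav, ← hgck]⟩
      have e2 : (0 : A) = k₀ := hk₀u 0 ⟨map_zero f, by rw [zero_add]⟩
      rw [e1, ← e2]
    -- v + k = 0
    obtain ⟨k₁, -, hk₁u⟩ := hrep a hfa
    have h2 : v + k = 0 := by
      have e1 : v + k = k₁ := hk₁u (v + k)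
        ⟨by simp [hv0, hk0], by rw [add_assoc, ← hgck, ← hav]⟩
      have e2 : (0 : A) = k₁ := hk₁u 0 ⟨map_zero f, by rw [zero_add]⟩
      rw [e1, ← e2]
    exact ⟨c, v, hv0, ⟨⟨v, k, h2, h1⟩, rfl⟩, hav⟩
  · rintro ⟨c, v, hv0, hvu, rfl⟩
    obtain ⟨u, hvu0, huv0⟩ := hvu.exists_inv'
    have hu0 : f u = 0 := by
      have h : f u + f v = 0 := by rw [← map_add, huv0, map_zero]
      rwa [hv0, add_zero] at h
    refine ⟨f (g c), ⟨by simp [hv0], ?_⟩⟩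
    intro a' ha'
    have ha'' : f a' = f (g c) := by simpa [hv0] using ha'
    obtain ⟨k, ⟨hk0, hke⟩, hku⟩ := hgp a' c ha''
    refine ⟨k + u, ⟨by simp [hk0, hu0], ?_⟩, ?_⟩
    · calc a' = k + g c := hke
        _ = k + (u + v) + g c := by rw [huv0, add_zero]
        _ = k + u + (v + g c) := by simp only [add_assoc]
    · rintro k₁ ⟨hk₁0, hk₁e⟩
      have hkv : k₁ + v = k :=
        hku (k₁ + v) ⟨by simp [hk₁0, hv0], by rw [hk₁e, add_assoc]⟩
      calc k₁ = k₁ + (v + u) := by rw [hvu0, add_zero]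
        _ = (k₁ + v) + u := by rw [add_assoc]
        _ = k + u := by rw [hkv]

/-- Conjugation of a kernel unit by `g c` stays a kernel unit. -/
lemma conj_unit (hgp : ∀ a c, f a = f (g c) → ∃! k, f k = 0 ∧ a = k + g c)
    (c : C) (v : A) (hv0 : f v = 0) (hvu : IsAddUnit v) :
    ∃ w, f w = 0 ∧ IsAddUnit w ∧ g c + v = w + g c := by
  obtain ⟨u, hvu0, huv0⟩ := hvu.exists_inv'
  have hu0 : f u = 0 := by
    have h : f u + f v = 0 := by rw [← map_add, huv0, map_zero]
    rwa [hv0, add_zero] at h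
  obtain ⟨w, ⟨hw0, hwe⟩, -⟩ := hgp (g c + v) c (by simp [hv0])
  obtain ⟨w', ⟨hw'0, hw'e⟩, -⟩ := hgp (g c + u) c (by simp [hu0])
  obtain ⟨k₀, -, hk₀u⟩ := hgp (g c) c rfl
  have hz : (0 : A) = k₀ := hk₀u 0 ⟨map_zero f, by rw [zero_add]⟩
  have h1 : w + w' = 0 := by
    have h : w + w' = k₀ := hk₀u (w + w') ⟨by simp [hw0, hw'0], by
      rw [add_assoc, ← hw'e, ← add_assoc, ← hwe, add_assoc, hvu0, add_zero]⟩
    rw [h, ← hz]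
  have h2 : w' + w = 0 := by
    have h : w' + w = k₀ := hk₀u (w' + w) ⟨by simp [hw0, hw'0], by
      rw [add_assoc, ← hwe, ← add_assoc, ← hw'e, add_assoc, huv0, add_zero]⟩
    rw [h, ← hz]
  exact ⟨w, hw0, ⟨⟨w, w', h1, h2⟩, rfl⟩, hwe⟩

end Backward

/-- `f : A →+ B` is a regular Schreier epimorphism iff there is a monoid `C` and a
homomorphism `g : C →+ A` with `f ∘ g` surjective such that the split point
`(π₂, ⟨g,1⟩)` is a Schreier point. -/
theorem stmt13 {A B : Type u} [AddMonoid A] [AddMonoid B] (f : A →+ B) :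
    (Surjective f ∧ (∀ b : B, ∃ a : A, IsRep f a b) ∧
      (∃ M : AddSubmonoid A, (M : Set A) = {a | ∃ b, IsRep f a b})) ↔
    (∃ (C : Type u) (_ : AddMonoid C) (g : C →+ A),
      Surjective (f.comp g) ∧ SchreierPoint (proj2 f (f.comp g)) (liftg f g)) := by
  constructor
  · rintro ⟨hsurj, hrep, M, hM⟩
    refine ⟨M, inferInstance, M.subtype, ?_, ?_⟩
    · intro b
      obtain ⟨a, ha⟩ := hrep b
      have haM : a ∈ M := by
        rw [← SetLike.mem_coe, hM]
        exact ⟨b, ha⟩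
      exact ⟨⟨a, haM⟩, ha.1⟩
    · rw [schreierPoint_iff_gp]
      intro a c hac
      have hc : (c : A) ∈ M := c.2
      rw [← SetLike.mem_coe, hM] at hc
      obtain ⟨b, hcb⟩ := hc
      have hb : b = f (c : A) := hcb.1.symm
      subst hb
      exact hcb.2 a hac
  · rintro ⟨C, _, g, hsur, hsp⟩
    rw [schreierPoint_iff_gp] at hsp
    have hsurf : Surjective f := by
      intro b
      obtain ⟨c, hc⟩ := hsur b
      exact ⟨g c, hc⟩
    have hrep : ∀ b : B, ∃ a : A, IsRep f a b := by
      intro b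
      obtain ⟨c, hc⟩ := hsur b
      have hc' : f (g c) = b := hc
      exact ⟨g c, hc', fun a' ha' => hsp a' c (ha'.trans hc'.symm)⟩
    refine ⟨hsurf, hrep, ?_⟩
    refine ⟨⟨⟨{a | ∃ b, IsRep f a b}, ?_⟩, ?_⟩, rfl⟩
    · -- add_mem'
      intro a₁ a₂ h₁ h₂
      rw [Set.mem_setOf_eq, rep_char f g hsp hsur] at h₁ h₂ ⊢
      obtain ⟨c₁, v₁, hv₁0, hv₁u, rfl⟩ := h₁
      obtain ⟨c₂, v₂, hv₂0, hv₂u, rfl⟩ := h₂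
      obtain ⟨w, hw0, hwu, hwe⟩ := conj_unit f g hsp c₁ v₂ hv₂0 hv₂u
      refine ⟨c₁ + c₂, v₁ + w, by simp [hv₁0, hw0], hv₁u.add hwu, ?_⟩
      calc v₁ + g c₁ + (v₂ + g c₂)
          = v₁ + (g c₁ + v₂) + g c₂ := by simp only [add_assoc]
        _ = v₁ + (w + g c₁) + g c₂ := by rw [hwe]
        _ = v₁ + w + g (c₁ + c₂) := by simp only [map_add, add_assoc]
    · -- zero_mem'
      rw [Set.mem_setOf_eq, rep_char f g hsp hsur]
      exact ⟨0, 0, map_zero f, isAddUnit_zero, by simp⟩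
end

section
/- In the category of monoids, the class of Schreier generalized points is pullback stable: if (f : A → B, g : C → A) is a Schreier generalized point and x : X → B is any monoid homomorphism, then the pullback generalized point (π₂ : A ×_B X → X, g×1 : C ×_B X → A ×_B X) is also a Schreier generalized point. -/
open Function

/-- The induced morphism `g×1 : C ×_B X →+ A ×_B X` between pullbacks. -/
def gtimes1 {A B C X : Type*} [AddMonoid A] [AddMonoid B] [AddMonoid C] [AddMonoid X]
    (f : A →+ B) (g : C →+ A) (x : X →+ B) :
    (pbk (f.comp g) x) →+ (pbk f x) :=
  AddMonoidHom.codRestrict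
    ((g.prodMap (AddMonoidHom.id X)).comp (pbk (f.comp g) x).subtype)
    (pbk f x) (fun p => p.2)

/-- Schreier generalized points are pullback stable: the pullback
`(π₂ : A ×_B X →+ X, g×1)` of a Schreier generalized point `(f, g)` along any
homomorphism `x : X →+ B` is again a Schreier generalized point. -/
theorem stmt14 {A B C X : Type*} [AddMonoid A] [AddMonoid B] [AddMonoid C] [AddMonoid X]
    (f : A →+ B) (g : C →+ A) (x : X →+ B) (hgp : SchreierGP f g) :
    SchreierGP (proj2 f x) (gtimes1 f g x) := by
  obtain ⟨hsurj, hsch⟩ := hgp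
  constructor
  · intro x'
    obtain ⟨c, hc⟩ := hsurj (x x')
    exact ⟨⟨(c, x'), hc⟩, rfl⟩
  · rintro ⟨⟨a, x'⟩, ha⟩ ⟨⟨c, x''⟩, hc⟩ h
    simp only [proj2, gtimes1, AddMonoidHom.coe_comp, AddMonoidHom.coe_snd,
      AddSubmonoid.coe_subtype, Function.comp_apply, AddMonoidHom.codRestrict_apply] at h
    subst h
    have hfa : f a = f (g c) := by
      have : f a = x x' := ha
      rw [this]; exact hc.symm
    obtain ⟨k, ⟨hk0, hk⟩, huniq⟩ := hsch a c hfa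
    refine ⟨⟨(k, 0), by simpa [pbk] using hk0⟩, ⟨?_, ?_⟩, ?_⟩
    · rfl
    · apply Subtype.ext
      simp only [AddSubmonoid.coe_add]
      exact Prod.ext hk (by simp [gtimes1]; rfl)
    · rintro ⟨⟨k', x₀⟩, hk'mem⟩ ⟨hk'0, hk'⟩
      have hx₀ : x₀ = 0 := hk'0
      subst hx₀
      have hf0 : f k' = 0 := by simpa [pbk] using hk'mem
      have hprod : (a, x') = (k' + g c, 0 + x') := congrArg Subtype.val hk'
      have hk'a : a = k' + g c := congrArg Prod.fst hprod
      have := huniq k' ⟨hf0, hk'a⟩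
      exact Subtype.ext (Prod.ext this rfl)
end

section
/- Let f : A → B and g : C → A be monoid homomorphisms with f∘g surjective, and let π₂ : A ×_B C → C be the second projection of the pullback of f and f∘g, with splitting ⟨g,1_C⟩. Then (f, g) is a Schreier generalized point if and only if the generalized point (π₂, ⟨g,1_C⟩) (whose composite is 1_C) is a Schreier generalized point. -/
open Function

/-- `(f, g)` is a Schreier generalized point iff the generalized point
`(π₂, ⟨g,1⟩)` (whose composite is the identity) is a Schreier generalized point. -/
theorem stmt16 {A B C : Type*} [AddMonoid A] [AddMonoid B] [AddMonoid C]
    (f : A →+ B) (g : C →+ A) (hsurj : Surjective (f.comp g)) :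
    SchreierGP f g ↔ SchreierGP (proj2 f (f.comp g)) (liftg f g) := by
  constructor
  · rintro ⟨-, h⟩
    refine ⟨fun c => ⟨c, rfl⟩, ?_⟩
    intro a c hac
    have hc : (a : A × C).2 = c := hac
    have hfa : f (a : A × C).1 = f (g c) := by
      have := a.2
      simp only [pbk, AddSubmonoid.mem_mk, Set.mem_setOf_eq] at this
      rw [this, hc]; rfl
    obtain ⟨k₁, ⟨hk0, hka⟩, huniq⟩ := h (a : A × C).1 c hfa
    refine ⟨(⟨(k₁, 0), by simpa [pbk] using hk0⟩ : pbk f (f.comp g)), ⟨rfl, ?_⟩, ?_⟩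
    · apply Subtype.ext
      exact Prod.ext hka (by show (a : A × C).2 = 0 + c; rw [zero_add]; exact hc)
    · rintro k' ⟨hk'0, hk'a⟩
      have hk'0' : ((k' : A × C).2 : C) = 0 := hk'0
      have hmem : f (k' : A × C).1 = f (g (k' : A × C).2) := k'.2
      have hf0 : f (k' : A × C).1 = 0 := by rw [hmem, hk'0', map_zero, map_zero]
      have ha1 : (a : A × C).1 = (k' : A × C).1 + g c :=
        congrArg Prod.fst (congrArg Subtype.val hk'a)
      have := huniq (k' : A × C).1 ⟨hf0, ha1⟩
      apply Subtype.ext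
      exact Prod.ext this hk'0'
  · rintro ⟨-, h⟩
    refine ⟨hsurj, ?_⟩
    intro a c hfa
    have hfa' : f a = (f.comp g) c := hfa
    obtain ⟨k, ⟨hk0, hka⟩, huniq⟩ := h ⟨(a, c), hfa'⟩ c rfl
    have hk0' : ((k : A × C).2 : C) = 0 := hk0
    have hmem : f (k : A × C).1 = f (g (k : A × C).2) := k.2
    refine ⟨(k : A × C).1, ⟨by rw [hmem, hk0', map_zero, map_zero],
      congrArg Prod.fst (congrArg Subtype.val hka)⟩, ?_⟩
    rintro k₁' ⟨h0, h1⟩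
    have : (⟨(k₁', 0), by simpa [pbk] using h0⟩ : pbk f (f.comp g)) = k := by
      refine huniq _ ⟨rfl, ?_⟩
      apply Subtype.ext
      exact Prod.ext h1 (zero_add c).symm
    exact congrArg (fun x : pbk f (f.comp g) => (x : A × C).1) this
end

section
/- Every Schreier point of monoids is a strong point: if (f : A → B, s : B → A) satisfies f∘s = id_B and every a ∈ A is uniquely k + s(f(a)) with k ∈ ker f, then any submonoid M of A containing s(B) and ker f equals A. -/
open Function

/-- Every Schreier point of monoids is strong: any submonoid of `A` containing
`s(B)` and `ker f` is all of `A`. -/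
theorem stmt17 {A B : Type*} [AddMonoid A] [AddMonoid B] (f : A →+ B) (s : B →+ A)
    (hfs : ∀ b, f (s b) = b) (hsch : SchreierPoint f s) :
    ∀ M : AddSubmonoid A, (∀ b, s b ∈ M) → (∀ a, f a = 0 → a ∈ M) → M = ⊤ := by
  intro M hs hk
  ext a
  simp only [AddSubmonoid.mem_top, iff_true]
  obtain ⟨k, ⟨hk0, hak⟩, _⟩ := hsch a
  rw [hak]
  exact M.add_mem (hk k hk0) (hs _)
end
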